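/- Closed form of the point cloud convolution: let σ > 0, c > 0, let x_1,…,x_I ∈ ℝ³ be a point cloud with weights ω_1,…,ω_I ∈ ℝ, let f ∈ ℝ^{I×J} be a point cloud function, let y_1,…,y_L ∈ ℝ³ be kernel translations, and let k ∈ ℝ^{L×J×M} be kernel coefficients. Define the extended function ψ_j(p) = c·Σ_i ω_i f_{ij} Φ_σ(‖p − x_i‖) and the kernel κ_{jm}(z) = Σ_l k_{ljm} Φ_σ(‖z − y_l‖). Then for every x ∈ ℝ³ and every output channel m, the convolution ∫_{ℝ³} Σ_j ψ_j(y)·κ_{jm}(x − y) dy = c·(πσ²)^{3/2} · Σ_{i,j,l} f_{ij} k_{ljm} ω_i · exp(−‖x − x_i − y_l‖²/(4σ²)). -/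

import Mathlib

open MeasureTheory

/-- Gaussian radial basis function `Φ_σ(r) = exp(−r²/(2σ²))`. -/
noncomputable def Phi (σ r : ℝ) : ℝ := Real.exp (-r ^ 2 / (2 * σ ^ 2))

/-- Pointwise completion of the square for a product of two Gaussians. -/
lemma phi_mul_eq (σ : ℝ) (hσ : 0 < σ) (a b xp u : EuclideanSpace ℝ (Fin 3)) :
    Phi σ ‖u - a‖ * Phi σ ‖xp - u - b‖ =
      Real.exp (-‖xp - a - b‖ ^ 2 / (4 * σ ^ 2)) *
        Real.exp (-(1 / σ ^ 2) * ‖u - (2:ℝ)⁻¹ • (a + (xp - b))‖ ^ 2) := by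
  set s : EuclideanSpace ℝ (Fin 3) := xp - b with hs
  set mp : EuclideanSpace ℝ (Fin 3) := (2:ℝ)⁻¹ • (a + s) with hmp
  have h1 : xp - u - b = s - u := by rw [hs]; abel
  have e1 : (u - a) + (u - s) = (2:ℝ) • (u - mp) := by
    rw [hmp]; module
  have e2 : (u - a) - (u - s) = xp - a - b := by rw [hs]; abel
  have hpar := parallelogram_law_with_norm ℝ (u - a) (u - s)
  rw [e1, e2] at hpar
  rw [norm_smul] at hpar
  simp only [Real.norm_ofNat] at hpar
  have hns : ‖s - u‖ = ‖u - s‖ := norm_sub_rev _ _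
  have key : ‖u - a‖ ^ 2 + ‖u - s‖ ^ 2 = 2 * ‖u - mp‖ ^ 2 + ‖xp - a - b‖ ^ 2 / 2 := by
    nlinarith [hpar]
  rw [h1, hns]
  unfold Phi
  rw [← Real.exp_add, ← Real.exp_add]
  congr 1
  have hσ2 : σ ^ 2 ≠ 0 := by positivity
  field_simp
  linear_combination (-4) * key

lemma integrable_gauss (b : ℝ) (hb : 0 < b) :
    Integrable (fun u : EuclideanSpace ℝ (Fin 3) => Real.exp (-b * ‖u‖ ^ 2)) := by
  have h := (GaussianFourier.integrable_cexp_neg_mul_sq_norm_add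
    (V := EuclideanSpace ℝ (Fin 3)) (b := (b : ℂ)) (by simpa using hb) 0 0).norm
  convert h using 2 with u
  simp [Complex.norm_exp]
  left
  norm_cast

lemma integrable_phi_mul (σ : ℝ) (hσ : 0 < σ) (a b xp : EuclideanSpace ℝ (Fin 3)) :
    Integrable (fun u : EuclideanSpace ℝ (Fin 3) =>
      Phi σ ‖u - a‖ * Phi σ ‖xp - u - b‖) := by
  simp_rw [phi_mul_eq σ hσ a b xp]
  exact (((integrable_gauss (1 / σ ^ 2) (by positivity)).comp_sub_right
    ((2:ℝ)⁻¹ • (a + (xp - b)))).const_mul _)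

lemma gauss_conv (σ : ℝ) (hσ : 0 < σ) (a b xp : EuclideanSpace ℝ (Fin 3)) :
    ∫ u : EuclideanSpace ℝ (Fin 3), Phi σ ‖u - a‖ * Phi σ ‖xp - u - b‖
      = (Real.pi * σ ^ 2) ^ ((3 : ℝ) / 2) *
          Real.exp (-‖xp - a - b‖ ^ 2 / (4 * σ ^ 2)) := by
  simp_rw [phi_mul_eq σ hσ a b xp]
  rw [integral_const_mul]
  rw [integral_sub_right_eq_self
    (fun u : EuclideanSpace ℝ (Fin 3) => Real.exp (-(1 / σ ^ 2) * ‖u‖ ^ 2)) _]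
  rw [GaussianFourier.integral_rexp_neg_mul_sq_norm (by positivity : (0:ℝ) < 1 / σ ^ 2)]
  have h1 : Real.pi / (1 / σ ^ 2) = Real.pi * σ ^ 2 := by field_simp
  rw [h1, finrank_euclideanSpace_fin]
  push_cast
  ring

/-- Closed form of the point cloud convolution: convolving the extended
function `ψ_j(p) = c Σ_i ω_i f_{ij} Φ_σ(‖p − x_i‖)` with the kernel
`κ_{jm}(z) = Σ_l k_{ljm} Φ_σ(‖z − y_l‖)` gives
`c (πσ²)^{3/2} Σ_{i,j,l} f_{ij} k_{ljm} ω_i exp(−‖x − x_i − y_l‖²/(4σ²))`. -/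
theorem point_cloud_convolution_closed_form
    (σ c : ℝ) (hσ : 0 < σ) (hc : 0 < c)
    (I J L M : ℕ)
    (x : Fin I → EuclideanSpace ℝ (Fin 3)) (ω : Fin I → ℝ)
    (f : Fin I → Fin J → ℝ)
    (y : Fin L → EuclideanSpace ℝ (Fin 3))
    (k : Fin L → Fin J → Fin M → ℝ)
    (ψ : Fin J → EuclideanSpace ℝ (Fin 3) → ℝ)
    (hψ : ∀ j p, ψ j p = c * ∑ i, ω i * f i j * Phi σ ‖p - x i‖)
    (κ : Fin J → Fin M → EuclideanSpace ℝ (Fin 3) → ℝ)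
    (hκ : ∀ j m z, κ j m z = ∑ l, k l j m * Phi σ ‖z - y l‖)
    (xp : EuclideanSpace ℝ (Fin 3)) (m : Fin M) :
    ∫ yv : EuclideanSpace ℝ (Fin 3), ∑ j, ψ j yv * κ j m (xp - yv)
      = c * (Real.pi * σ ^ 2) ^ ((3 : ℝ) / 2) *
          ∑ i, ∑ j, ∑ l,
            f i j * k l j m * ω i *
              Real.exp (-‖xp - x i - y l‖ ^ 2 / (4 * σ ^ 2)) := by
  have key : ∀ yv : EuclideanSpace ℝ (Fin 3),
      ∑ j, ψ j yv * κ j m (xp - yv)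
        = ∑ i, ∑ j, ∑ l, (c * (f i j * k l j m * ω i)) *
            (Phi σ ‖yv - x i‖ * Phi σ ‖xp - yv - y l‖) := by
    intro yv
    simp only [hψ, hκ, Finset.mul_sum, Finset.sum_mul]
    rw [Finset.sum_comm]
    refine (Finset.sum_congr rfl fun j _ => Finset.sum_comm).trans ?_
    rw [Finset.sum_comm]
    refine Finset.sum_congr rfl fun i _ => ?_
    rw [Finset.sum_comm]
    exact Finset.sum_congr rfl fun j _ =>
      Finset.sum_congr rfl fun l _ => by ring
  simp_rw [key]
  rw [integral_finset_sum _ fun i _ => integrable_finset_sum _ fun j _ =>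
    integrable_finset_sum _ fun l _ =>
      ((integrable_phi_mul σ hσ (x i) (y l) xp).const_mul _)]
  rw [Finset.mul_sum]
  refine Finset.sum_congr rfl fun i _ => ?_
  rw [integral_finset_sum _ fun j _ => integrable_finset_sum _ fun l _ =>
      ((integrable_phi_mul σ hσ (x i) (y l) xp).const_mul _), Finset.mul_sum]
  refine Finset.sum_congr rfl fun j _ => ?_
  rw [integral_finset_sum _ fun l _ =>
      ((integrable_phi_mul σ hσ (x i) (y l) xp).const_mul _), Finset.mul_sum]
  refine Finset.sum_congr rfl fun l _ => ?_
  rw [integral_const_mul, gauss_conv σ hσ (x i) (y l) xp]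
  ring
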